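/- Let γ be a (p,q)-clan containing a + at position r and a - at position s with r < s, and let γ' be the clan obtained by replacing these two signs with a new pair of matching natural numbers. Then the rank numbers change exactly as follows: γ'(k;+) = γ(k;+) - 1 for all k with r ≤ k < s; γ'(k;-) = γ(k;-) for all k; γ'(k;l) = γ(k;l) + 1 whenever r ≤ k < l < s; and all other rank numbers are unchanged. In particular γ < γ' in the combinatorial Bruhat order. -/
import Mathlib


open Finset

/-- A `(p,q)`-clan on `n = p+q` positions.  Each position carries either a sign
(`Sum.inl true` = `+`, `Sum.inl false` = `-`) or is matched with another position
(`Sum.inr j` means position `i` is matched with position `j`).  Matching is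
symmetric and irreflexive, and `#+ - #- = p - q`. -/
structure Clan (p q : ℕ) where
  c : Fin (p + q) → Bool ⊕ Fin (p + q)
  mate_ne : ∀ i j, c i = Sum.inr j → i ≠ j
  mate_mate : ∀ i j, c i = Sum.inr j → c j = Sum.inr i
  signs : (Finset.univ.filter fun i => c i = Sum.inl true).card + q
        = (Finset.univ.filter fun i => c i = Sum.inl false).card + p

namespace Clan

variable {p q : ℕ}

/-- `γ(i;+)`: number of `+` signs plus complete pairs among the first `i` positions
(1-indexed; position `a : Fin (p+q)` is among the first `i` iff `a.val < i`). -/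
def rankPlus (γ : Clan p q) (i : ℕ) : ℕ :=
  (Finset.univ.filter fun a : Fin (p + q) => a.val < i ∧ γ.c a = Sum.inl true).card
    + (Finset.univ.filter fun a : Fin (p + q) =>
        a.val < i ∧ ∃ b, γ.c a = Sum.inr b ∧ b < a).card

/-- `γ(i;-)`: number of `-` signs plus complete pairs among the first `i` positions. -/
def rankMinus (γ : Clan p q) (i : ℕ) : ℕ :=
  (Finset.univ.filter fun a : Fin (p + q) => a.val < i ∧ γ.c a = Sum.inl false).card
    + (Finset.univ.filter fun a : Fin (p + q) =>
        a.val < i ∧ ∃ b, γ.c a = Sum.inr b ∧ b < a).card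

/-- `γ(i;j)`: number of pairs `c_s = c_t` with `s ≤ i < j < t` (1-indexed). -/
def rankPair (γ : Clan p q) (i j : ℕ) : ℕ :=
  (Finset.univ.filter fun a : Fin (p + q) =>
    a.val < i ∧ ∃ b, γ.c a = Sum.inr b ∧ j ≤ b.val).card

/-- The combinatorial Bruhat order on `(p,q)`-clans. -/
def le (γ τ : Clan p q) : Prop :=
  (∀ i, τ.rankPlus i ≤ γ.rankPlus i) ∧
  (∀ i, τ.rankMinus i ≤ γ.rankMinus i) ∧
  (∀ i j, i < j → γ.rankPair i j ≤ τ.rankPair i j)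

/-- Strict combinatorial Bruhat order. -/
def lt (γ τ : Clan p q) : Prop := Clan.le γ τ ∧ ¬ Clan.le τ γ

end Clan

/-- the move `+- → 11` (a `+` at position `r`, a `-` at position
`s > r`, replaced by a matching pair) changes rank numbers exactly as stated,
and yields `γ < γ'` in the combinatorial Bruhat order. -/
theorem clan_move_plusminus {p q : ℕ} (γ γ' : Clan p q) (r s : Fin (p + q))
    (hrs : r < s)
    (hr : γ.c r = Sum.inl true) (hs : γ.c s = Sum.inl false)
    (hr' : γ'.c r = Sum.inr s) (hs' : γ'.c s = Sum.inr r)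
    (hother : ∀ a, a ≠ r → a ≠ s → γ'.c a = γ.c a) :
    (∀ k, r.val < k → k ≤ s.val → γ'.rankPlus k + 1 = γ.rankPlus k) ∧
    (∀ k, γ'.rankMinus k = γ.rankMinus k) ∧
    (∀ k l, k < l → r.val < k → l ≤ s.val → γ'.rankPair k l = γ.rankPair k l + 1) ∧
    (∀ k, ¬(r.val < k ∧ k ≤ s.val) → γ'.rankPlus k = γ.rankPlus k) ∧
    (∀ k l, k < l → ¬(r.val < k ∧ l ≤ s.val) → γ'.rankPair k l = γ.rankPair k l) ∧
    Clan.lt γ γ' := by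
  have hrsv : r.val < s.val := hrs
  have hne : r ≠ s := Fin.ne_of_lt hrs
  -- plus filter set
  have hPset : ∀ k, (Finset.univ.filter fun a : Fin (p + q) =>
        a.val < k ∧ γ'.c a = Sum.inl true)
      = (Finset.univ.filter fun a : Fin (p + q) =>
        a.val < k ∧ γ.c a = Sum.inl true).erase r := by
    intro k
    ext a
    simp only [Finset.mem_erase, Finset.mem_filter, Finset.mem_univ, true_and]
    by_cases har : a = r
    · subst har; simp [hr']
    by_cases has : a = s
    · subst has; simp [hs', hs, har]
    · rw [hother a har has]; tauto
  -- minus filter set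
  have hMset : ∀ k, (Finset.univ.filter fun a : Fin (p + q) =>
        a.val < k ∧ γ'.c a = Sum.inl false)
      = (Finset.univ.filter fun a : Fin (p + q) =>
        a.val < k ∧ γ.c a = Sum.inl false).erase s := by
    intro k
    ext a
    simp only [Finset.mem_erase, Finset.mem_filter, Finset.mem_univ, true_and]
    by_cases har : a = r
    · subst har; simp [hr', hr, hne]
    by_cases has : a = s
    · subst has; simp [hs']
    · rw [hother a har has]; tauto
  -- complete-pair filter set
  have hCset : ∀ k, (Finset.univ.filter fun a : Fin (p + q) =>
        a.val < k ∧ ∃ b, γ'.c a = Sum.inr b ∧ b < a)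
      = (if s.val < k then
          insert s (Finset.univ.filter fun a : Fin (p + q) =>
            a.val < k ∧ ∃ b, γ.c a = Sum.inr b ∧ b < a)
         else (Finset.univ.filter fun a : Fin (p + q) =>
            a.val < k ∧ ∃ b, γ.c a = Sum.inr b ∧ b < a)) := by
    intro k
    split_ifs with hsk
    · ext a
      simp only [Finset.mem_insert, Finset.mem_filter, Finset.mem_univ, true_and]
      by_cases har : a = r
      · subst har
        simp only [hr', hr, Sum.inr.injEq]
        constructor
        · rintro ⟨-, b, rfl, hb⟩; exact absurd hb (not_lt.mpr hrs.le)
        · rintro (h | ⟨-, b, h, -⟩)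
          · exact absurd h hne
          · exact absurd h (by simp)
      by_cases has : a = s
      · subst has
        simp only [hs', hs, Sum.inr.injEq]
        constructor
        · intro _; exact Or.inl trivial
        · intro _; exact ⟨hsk, r, rfl, hrs⟩
      · rw [hother a har has]
        constructor
        · intro h; exact Or.inr h
        · rintro (h | h)
          · exact absurd h has
          · exact h
    · ext a
      simp only [Finset.mem_filter, Finset.mem_univ, true_and]
      by_cases har : a = r
      · subst har
        simp only [hr', hr, Sum.inr.injEq]
        constructor
        · rintro ⟨-, b, rfl, hb⟩; exact absurd hb (not_lt.mpr hrs.le)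
        · rintro ⟨-, b, h, -⟩; exact absurd h (by simp)
      by_cases has : a = s
      · subst has
        simp only [hs', hs, Sum.inr.injEq]
        constructor
        · rintro ⟨h, -⟩; exact absurd h hsk
        · rintro ⟨-, b, h, -⟩; exact absurd h (by simp)
      · rw [hother a har has]
  -- rankPair filter set
  have hRset : ∀ k l, k < l → (Finset.univ.filter fun a : Fin (p + q) =>
        a.val < k ∧ ∃ b, γ'.c a = Sum.inr b ∧ l ≤ b.val)
      = (if r.val < k ∧ l ≤ s.val then
          insert r (Finset.univ.filter fun a : Fin (p + q) =>
            a.val < k ∧ ∃ b, γ.c a = Sum.inr b ∧ l ≤ b.val)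
         else (Finset.univ.filter fun a : Fin (p + q) =>
            a.val < k ∧ ∃ b, γ.c a = Sum.inr b ∧ l ≤ b.val)) := by
    intro k l hkl
    split_ifs with hcond
    · ext a
      simp only [Finset.mem_insert, Finset.mem_filter, Finset.mem_univ, true_and]
      by_cases har : a = r
      · subst har; simp [hr']; omega
      by_cases has : a = s
      · subst has
        simp only [hs', hs, Sum.inr.injEq]
        constructor
        · rintro ⟨h1, b, rfl, hb⟩; omega
        · rintro (h | ⟨-, b, h, -⟩)
          · exact absurd h.symm hne
          · exact absurd h (by simp)
      · rw [hother a har has]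
        constructor
        · intro h; exact Or.inr h
        · rintro (h | h)
          · exact absurd h har
          · exact h
    · ext a
      simp only [Finset.mem_filter, Finset.mem_univ, true_and]
      by_cases har : a = r
      · subst har
        simp only [hr', hr, Sum.inr.injEq]
        constructor
        · rintro ⟨h1, b, rfl, hb⟩; exact absurd ⟨h1, hb⟩ hcond
        · rintro ⟨-, b, h, -⟩; exact absurd h (by simp)
      by_cases has : a = s
      · subst has
        simp only [hs', hs, Sum.inr.injEq]
        constructor
        · rintro ⟨h1, b, rfl, hb⟩; omega
        · rintro ⟨-, b, h, -⟩; exact absurd h (by simp)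
      · rw [hother a har has]
  -- membership facts
  have hrP : ∀ k, r ∈ (Finset.univ.filter fun a : Fin (p + q) =>
      a.val < k ∧ γ.c a = Sum.inl true) ↔ r.val < k := by
    intro k; simp [hr]
  have hsM : ∀ k, s ∈ (Finset.univ.filter fun a : Fin (p + q) =>
      a.val < k ∧ γ.c a = Sum.inl false) ↔ s.val < k := by
    intro k; simp [hs]
  have hsC : ∀ k, s ∉ (Finset.univ.filter fun a : Fin (p + q) =>
      a.val < k ∧ ∃ b, γ.c a = Sum.inr b ∧ b < a) := by
    intro k; simp [hs]
  have hrR : ∀ k l, r ∉ (Finset.univ.filter fun a : Fin (p + q) =>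
      a.val < k ∧ ∃ b, γ.c a = Sum.inr b ∧ l ≤ b.val) := by
    intro k l; simp [hr]
  -- main rank formulas
  have Hplus : ∀ k, γ'.rankPlus k + (if r.val < k then 1 else 0)
      = γ.rankPlus k + (if s.val < k then 1 else 0) := by
    intro k
    unfold Clan.rankPlus
    rw [hPset k, hCset k]
    by_cases hrk : r.val < k
    · have hmem := (hrP k).mpr hrk
      rw [Finset.card_erase_of_mem hmem]
      have hpos := Finset.card_pos.mpr ⟨r, hmem⟩
      by_cases hsk : s.val < k
      · rw [if_pos hsk, if_pos hrk, if_pos hsk, Finset.card_insert_of_notMem (hsC k)]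
        omega
      · rw [if_neg hsk, if_pos hrk, if_neg hsk]
        omega
    · have hsk : ¬ s.val < k := by omega
      rw [Finset.erase_eq_of_notMem (fun h => hrk ((hrP k).mp h)),
        if_neg hsk, if_neg hrk, if_neg hsk]
  have Hminus : ∀ k, γ'.rankMinus k = γ.rankMinus k := by
    intro k
    unfold Clan.rankMinus
    rw [hMset k, hCset k]
    by_cases hsk : s.val < k
    · have hmem := (hsM k).mpr hsk
      rw [Finset.card_erase_of_mem hmem, if_pos hsk,
        Finset.card_insert_of_notMem (hsC k)]
      have hpos := Finset.card_pos.mpr ⟨s, hmem⟩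
      omega
    · rw [Finset.erase_eq_of_notMem (fun h => hsk ((hsM k).mp h)), if_neg hsk]
  have Hpair : ∀ k l, k < l → γ'.rankPair k l
      = γ.rankPair k l + (if r.val < k ∧ l ≤ s.val then 1 else 0) := by
    intro k l hkl
    unfold Clan.rankPair
    rw [hRset k l hkl]
    split_ifs with hc
    · rw [Finset.card_insert_of_notMem (hrR k l)]
    · omega
  refine ⟨?_, Hminus, ?_, ?_, ?_, ⟨fun i => ?_, fun i => (Hminus i).le, fun i j hij => ?_⟩, ?_⟩
  · intro k hk1 hk2
    have := Hplus k
    rw [if_pos hk1, if_neg (by omega)] at this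
    omega
  · intro k l hkl hk1 hk2
    rw [Hpair k l hkl, if_pos ⟨hk1, hk2⟩]
  · intro k hk
    have := Hplus k
    by_cases h1 : r.val < k
    · have h2 : s.val < k := by omega
      rw [if_pos h1, if_pos h2] at this; omega
    · have h2 : ¬ s.val < k := by omega
      rw [if_neg h1, if_neg h2] at this; omega
  · intro k l hkl hk
    rw [Hpair k l hkl, if_neg hk]
    omega
  · have := Hplus i
    by_cases h1 : r.val < i <;> by_cases h2 : s.val < i <;>
      simp [h1, h2] at this <;> omega
  · rw [Hpair i j hij]
    split_ifs <;> omega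
  · rintro ⟨h1, -, -⟩
    have hk := Hplus (r.val + 1)
    rw [if_pos (by omega), if_neg (by omega)] at hk
    have := h1 (r.val + 1)
    omega
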